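/- Define F_∞(μ₁,μ₂,ξ) = (μ₁, μ₂, ξ/(1−ξ)) for ξ ∈ [0,1), and S_∞(x,y,z) = (x/(1+z), y/(1+z), z/(1+z)). Then for all μ₁, μ₂ ∈ ℝ and all ξ ∈ [0,1), S_∞(F_∞(μ₁,μ₂,ξ)) = ((1−ξ)μ₁, (1−ξ)μ₂, ξ); moreover, setting ξ' = 1 − ξ, this composition equals the Duffy transformation ξ'(F_L(μ₁,μ₂) − a₀) + a₀ with collapsed vertex a₀ = (0,0,1) and base map F_L(μ₁,μ₂) = (μ₁, μ₂, 0). -/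

import Mathlib

/-- The map of the unit cube (coordinates `(μ₁,μ₂,ξ)`) onto the infinite pyramid,
`F_∞(μ₁,μ₂,ξ) = (μ₁, μ₂, ξ/(1−ξ))`. -/
noncomputable def Finf (μ₁ μ₂ ξ : ℝ) : ℝ × ℝ × ℝ := (μ₁, μ₂, ξ / (1 - ξ))

/-- The Nigam–Phillips map of the infinite pyramid onto the finite pyramid with apex
`(0,0,1)`, `S_∞(x,y,z) = (x/(1+z), y/(1+z), z/(1+z))`. -/
noncomputable def Sinf (p : ℝ × ℝ × ℝ) : ℝ × ℝ × ℝ :=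
  (p.1 / (1 + p.2.2), p.2.1 / (1 + p.2.2), p.2.2 / (1 + p.2.2))

/-- For `ξ ∈ [0,1)`, `S_∞(F_∞(μ₁,μ₂,ξ)) = ((1−ξ)μ₁, (1−ξ)μ₂, ξ)`, and with
`ξ' = 1 − ξ` this equals the Duffy transformation `ξ'(F_L(μ₁,μ₂) − a₀) + a₀` with
collapsed vertex `a₀ = (0,0,1)` and base map `F_L(μ₁,μ₂) = (μ₁,μ₂,0)`. -/
theorem pyramid_duffy_composition
    (μ₁ μ₂ ξ : ℝ) (hξ0 : 0 ≤ ξ) (hξ1 : ξ < 1) :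
    Sinf (Finf μ₁ μ₂ ξ) = ((1 - ξ) * μ₁, (1 - ξ) * μ₂, ξ)
    ∧ Sinf (Finf μ₁ μ₂ ξ)
        = (1 - ξ) • (((μ₁, μ₂, 0) : ℝ × ℝ × ℝ) - ((0, 0, 1) : ℝ × ℝ × ℝ))
            + ((0, 0, 1) : ℝ × ℝ × ℝ) := by
  have h1 : (1 : ℝ) - ξ ≠ 0 := by linarith
  have key : Sinf (Finf μ₁ μ₂ ξ) = ((1 - ξ) * μ₁, (1 - ξ) * μ₂, ξ) := by
    have hden : 1 + ξ / (1 - ξ) = 1 / (1 - ξ) := by field_simp; ring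
    simp only [Sinf, Finf, hden]
    refine Prod.ext ?_ (Prod.ext ?_ ?_) <;> field_simp <;> ring
  refine ⟨key, key.trans ?_⟩
  simp [Prod.ext_iff, smul_sub, Prod.smul_mk]
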